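/- Let H be a real Hilbert space, B a Fredholm symmetric bilinear form on H, and X ⊆ H a closed subspace with X ∩ Ker(B) = {0}. Then n₋(B) ≥ n₋(B|_{X×X}) + dim Ker(B|_{X×X}), where n₋ denotes the Morse index and Ker(B|_{X×X}) = {x ∈ X : B(x,y) = 0 for all y ∈ X}. -/

import Mathlib

open scoped RealInnerProductSpace

/-- Morse index of the restriction of `B` to a subspace `X`. -/
noncomputable def morseIndexOn {H : Type*} [NormedAddCommGroup H] [InnerProductSpace ℝ H]
    (B : H →L[ℝ] H →L[ℝ] ℝ) (X : Submodule ℝ H) : Cardinal :=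
  ⨆ W : {W : Submodule ℝ H // W ≤ X ∧ ∀ x ∈ W, x ≠ 0 → B x x < 0}, Module.rank ℝ W.1

/-- The kernel of the restriction of `B` to `X`: `{x ∈ X : B(x,y) = 0 for all y ∈ X}`. -/
def kerOn {H : Type*} [NormedAddCommGroup H] [InnerProductSpace ℝ H]
    (B : H →L[ℝ] H →L[ℝ] ℝ) (X : Submodule ℝ H) : Submodule ℝ H where
  carrier := {x | x ∈ X ∧ ∀ y ∈ X, B x y = 0}
  zero_mem' := ⟨X.zero_mem, fun y _ => by simp⟩
  add_mem' := fun {x z} hx hz => ⟨X.add_mem hx.1 hz.1, fun y hy => by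
    simp [map_add, hx.2 y hy, hz.2 y hy]⟩
  smul_mem' := fun c {x} hx => ⟨X.smul_mem c hx.1, fun y hy => by
    simp [map_smul, hx.2 y hy]⟩

/-- Morse index of `B` on the whole space. -/
noncomputable def morseIndex {H : Type*} [NormedAddCommGroup H] [InnerProductSpace ℝ H]
    (B : H →L[ℝ] H →L[ℝ] ℝ) : Cardinal :=
  ⨆ W : {W : Submodule ℝ H // ∀ x ∈ W, x ≠ 0 → B x x < 0}, Module.rank ℝ W.1

/-- Key lemma: if `B` is represented by a self-adjoint operator `T`, `V` is a subspace on
which `B` is negative semidefinite and which meets `ker T` trivially, then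
`rank V ≤ morseIndex B`.  Proof: `v ↦ v - ε • T v` maps `V` injectively onto a subspace
on which `B` is negative definite, for small `ε > 0`. -/
theorem rank_le_morseIndex_of_semidef {H : Type*} [NormedAddCommGroup H]
    [InnerProductSpace ℝ H]
    (B : H →L[ℝ] H →L[ℝ] ℝ) (T : H →L[ℝ] H)
    (hrep : ∀ x y, B x y = ⟪T x, y⟫)
    (hsa : ∀ x y, ⟪T x, y⟫ = ⟪x, T y⟫)
    (V : Submodule ℝ H) (hVneg : ∀ v ∈ V, B v v ≤ 0)
    (hVker : ∀ v ∈ V, T v = 0 → v = 0) :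
    Module.rank ℝ V ≤ morseIndex B := by
  set ε : ℝ := (‖T‖ + 1)⁻¹ with hε
  have hTnn : (0:ℝ) ≤ ‖T‖ := norm_nonneg _
  have hεpos : 0 < ε := by positivity
  have hεT : ε * ‖T‖ < 1 := by
    rw [hε, inv_mul_lt_iff₀ (by positivity)]
    linarith
  set φ : H →ₗ[ℝ] H := LinearMap.id - ε • T.toLinearMap with hφ
  have hφ_apply : ∀ v, φ v = v - ε • T v := fun v => rfl
  have hφinj : Function.Injective φ := by
    rw [← LinearMap.ker_eq_bot]
    rw [LinearMap.ker_eq_bot']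
    intro v hv
    by_contra hv0
    have hveq : v = ε • T v := by
      have := hφ_apply v
      rw [hv] at this
      linear_combination (norm := module) -this
    have hnorm : ‖v‖ = ε * ‖T v‖ := by
      conv_lhs => rw [hveq]
      rw [norm_smul, Real.norm_eq_abs, abs_of_pos hεpos]
    have hTle : ‖T v‖ ≤ ‖T‖ * ‖v‖ := T.le_opNorm v
    have hvpos : 0 < ‖v‖ := norm_pos_iff.mpr hv0
    nlinarith
  set W' : Submodule ℝ H := V.map φ with hW'
  have hW'neg : ∀ x ∈ W', x ≠ 0 → B x x < 0 := by
    rintro x ⟨v, hv, rfl⟩ hx0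
    have hv0 : v ≠ 0 := by rintro rfl; exact hx0 (map_zero φ)
    have hTv : T v ≠ 0 := fun h => hv0 (hVker v hv h)
    have hp : (0:ℝ) < ‖T v‖ ^ 2 := pow_pos (norm_pos_iff.mpr hTv) 2
    have hBvv : ⟪T v, v⟫ ≤ 0 := by rw [← hrep]; exact hVneg v hv
    have h2 : ⟪T (T v), T v⟫ ≤ ‖T‖ * ‖T v‖ ^ 2 := by
      calc ⟪T (T v), T v⟫ ≤ ‖T (T v)‖ * ‖T v‖ := real_inner_le_norm _ _
        _ ≤ (‖T‖ * ‖T v‖) * ‖T v‖ := by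
            have := T.le_opNorm (T v)
            nlinarith [norm_nonneg (T v)]
        _ = ‖T‖ * ‖T v‖ ^ 2 := by ring
    have hcross : ⟪T (T v), v⟫ = ‖T v‖ ^ 2 := by
      rw [hsa (T v) v, real_inner_comm, ← real_inner_self_eq_norm_sq]
    have hexp : B (φ v) (φ v)
        = ⟪T v, v⟫ - 2 * ε * ‖T v‖ ^ 2 + ε ^ 2 * ⟪T (T v), T v⟫ := by
      rw [hφ_apply, hrep]
      rw [map_sub, map_smul]
      rw [inner_sub_left, inner_sub_right, inner_sub_right,
        real_inner_smul_left, real_inner_smul_left, real_inner_smul_right,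
        real_inner_smul_right, hcross, real_inner_self_eq_norm_sq]
      ring
    have h3 : ε ^ 2 * ⟪T (T v), T v⟫ ≤ ε ^ 2 * (‖T‖ * ‖T v‖ ^ 2) :=
      mul_le_mul_of_nonneg_left h2 (sq_nonneg ε)
    have h5 : (ε * ‖T‖) * (ε * ‖T v‖ ^ 2) < 1 * (ε * ‖T v‖ ^ 2) :=
      mul_lt_mul_of_pos_right hεT (mul_pos hεpos hp)
    have h6 : (0:ℝ) < ε * ‖T v‖ ^ 2 := mul_pos hεpos hp
    rw [hexp]
    nlinarith [h3, h5, h6, hBvv]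
  have hrank : Module.rank ℝ V = Module.rank ℝ W' :=
    (Submodule.equivMapOfInjective φ hφinj V).rank_eq
  rw [hrank]
  exact le_ciSup (Cardinal.bddAbove_range _)
    (⟨W', hW'neg⟩ : {W : Submodule ℝ H // ∀ x ∈ W, x ≠ 0 → B x x < 0})

/-- for a Fredholm symmetric bilinear form `B` and a closed subspace `X`
with `X ∩ Ker B = {0}`, one has `n₋(B) ≥ n₋(B|X) + dim Ker(B|X)`. -/
theorem stmt1 {H : Type*} [NormedAddCommGroup H] [InnerProductSpace ℝ H] [CompleteSpace H]
    (B : H →L[ℝ] H →L[ℝ] ℝ) (T : H →L[ℝ] H)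
    (hrep : ∀ x y, B x y = ⟪T x, y⟫)
    (hsa : ∀ x y, ⟪T x, y⟫ = ⟪x, T y⟫)
    (hker : FiniteDimensional ℝ (LinearMap.ker (T : H →ₗ[ℝ] H)))
    (hclosed : IsClosed (LinearMap.range (T : H →ₗ[ℝ] H) : Set H))
    (hcoker : FiniteDimensional ℝ (H ⧸ LinearMap.range (T : H →ₗ[ℝ] H)))
    (X : Submodule ℝ H) (hX : IsClosed (X : Set H))
    (hXker : ∀ x ∈ X, (∀ y, B x y = 0) → x = 0) :
    morseIndexOn B X + Module.rank ℝ (kerOn B X) ≤ morseIndex B := by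
  classical
  have hsymm : ∀ x y, B x y = B y x := fun x y => by
    rw [hrep, hrep, hsa, real_inner_comm]
  set N : Submodule ℝ H := kerOn B X with hNdef
  have hNmem : ∀ n ∈ N, n ∈ X ∧ ∀ y ∈ X, B n y = 0 := fun n hn => hn
  -- for each negative subspace W of X, rank W + rank N ≤ morseIndex B
  have key : ∀ W : {W : Submodule ℝ H // W ≤ X ∧ ∀ x ∈ W, x ≠ 0 → B x x < 0},
      Module.rank ℝ W.1 + Module.rank ℝ N ≤ morseIndex B := by
    rintro ⟨W, hWX, hWneg⟩
    -- W ⊓ N = ⊥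
    have hinf : W ⊓ N = ⊥ := by
      rw [eq_bot_iff]
      rintro x ⟨hxW, hxN⟩
      rw [Submodule.mem_bot]
      by_contra hx0
      have h1 : B x x < 0 := hWneg x hxW hx0
      have h2 : B x x = 0 := (hNmem x hxN).2 x (hNmem x hxN).1
      linarith
    -- B is negative semidefinite on W ⊔ N
    have hVneg : ∀ v ∈ W ⊔ N, B v v ≤ 0 := by
      intro v hv
      obtain ⟨w, hw, n, hn, rfl⟩ := Submodule.mem_sup.mp hv
      have hnX := (hNmem n hn).1
      have hnB := (hNmem n hn).2
      have hBnw : B n w = 0 := hnB w (hWX hw)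
      have hBwn : B w n = 0 := by rw [hsymm]; exact hBnw
      have hBnn : B n n = 0 := hnB n hnX
      have hexp : B (w + n) (w + n) = B w w + B w n + (B n w + B n n) := by
        simp only [map_add, ContinuousLinearMap.add_apply]
        ring
      rw [hexp, hBnw, hBwn, hBnn]
      by_cases hw0 : w = 0
      · simp [hw0]
      · have := hWneg w hw hw0; linarith
    -- (W ⊔ N) ∩ ker T = 0
    have hVker : ∀ v ∈ W ⊔ N, T v = 0 → v = 0 := by
      intro v hv hTv
      obtain ⟨w, hw, n, hn, rfl⟩ := Submodule.mem_sup.mp hv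
      have hnX := (hNmem n hn).1
      have hnB := (hNmem n hn).2
      have hBv : ∀ y, B (w + n) y = 0 := by
        intro y; rw [hrep, hTv]; simp
      have hw0 : w = 0 := by
        by_contra hw0
        have h1 : B (w + n) w = 0 := hBv w
        have h2 : B (w + n) w = B w w + B n w := by
          simp only [map_add, ContinuousLinearMap.add_apply]
        have h3 : B n w = 0 := hnB w (hWX hw)
        have h4 : B w w < 0 := hWneg w hw hw0
        rw [h2, h3] at h1
        linarith
      subst hw0
      rw [zero_add]
      rw [zero_add] at hBv
      exact hXker n hnX hBv
    have hrked := Submodule.rank_sup_add_rank_inf_eq W N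
    rw [hinf, rank_bot, add_zero] at hrked
    rw [← hrked]
    exact rank_le_morseIndex_of_semidef B T hrep hsa (W ⊔ N) hVneg hVker
  -- conclude by cardinal arithmetic on the supremum
  have hne : Nonempty {W : Submodule ℝ H // W ≤ X ∧ ∀ x ∈ W, x ≠ 0 → B x x < 0} := by
    refine ⟨⟨⊥, bot_le, ?_⟩⟩
    intro x hx hx0
    exact absurd (Submodule.mem_bot ℝ |>.mp hx) hx0
  rw [morseIndexOn, Cardinal.ciSup_add _ (Cardinal.bddAbove_range _)]
  exact ciSup_le' key
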